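/- arXiv:2501.15701 — 2 statements merged into one kernel-verified Lean document; each statement's English description precedes it below -/
import Mathlib

section
/- Let $\alpha \in (0,1)$ and define $\mathcal{L}$, $\Delta_u$, $\Delta_\tau$ as in the $\tau$-$u$ system with parameter $\alpha$. If $u_g(\tau) = 1 - \frac{2}{3}(\alpha-4)\tau + \frac{5}{3}\tau^2$, then $\mathcal{L}[u_g](\tau) > 0$ for all $\tau \in (-(1-\alpha)/2, 0)$. -/
noncomputable def DeltaU (α τ u : ℝ) : ℝ :=
  -2 * u ^ 2 + 2 * u - 4 / 3 * (α - 4) * τ * u + 10 / 3 * τ ^ 2 * u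

noncomputable def DeltaTau (α τ u : ℝ) : ℝ :=
  3 * (α - τ) * u - 3 * α - (4 * α - 1) * τ - (α - 2) * τ ^ 2 + τ ^ 3

noncomputable def Lop (α : ℝ) (u : ℝ → ℝ) (τ : ℝ) : ℝ :=
  DeltaTau α τ (u τ) * deriv u τ - DeltaU α τ (u τ)

lemma deriv_ug (α τ : ℝ) :
    deriv (fun t => 1 - 2 / 3 * (α - 4) * t + 5 / 3 * t ^ 2) τ
      = -2 / 3 * (α - 4) + 10 / 3 * τ := by
  have h : HasDerivAt (fun t : ℝ => 1 - 2 / 3 * (α - 4) * t + 5 / 3 * t ^ 2)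
      (-2 / 3 * (α - 4) + 10 / 3 * τ) τ := by
    have h1 : HasDerivAt (fun t : ℝ => t) 1 τ := hasDerivAt_id τ
    have h2 : HasDerivAt (fun t : ℝ => t ^ 2) (2 * τ ^ 1) τ := hasDerivAt_pow 2 τ
    have := ((hasDerivAt_const τ (1:ℝ)).sub ((h1.const_mul (2 / 3 * (α - 4))))).add
      (h2.const_mul (5 / 3))
    exact this.congr_deriv (by ring)
  exact h.deriv

theorem stmt_10 (α : ℝ) (hα : α ∈ Set.Ioo (0 : ℝ) 1) :
    ∀ τ ∈ Set.Ioo (-(1 - α) / 2) (0 : ℝ),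
      Lop α (fun t => 1 - 2 / 3 * (α - 4) * t + 5 / 3 * t ^ 2) τ > 0 := by
  obtain ⟨hα0, hα1⟩ := hα
  rintro τ ⟨ht1, ht2⟩
  have key : Lop α (fun t => 1 - 2 / 3 * (α - 4) * t + 5 / 3 * t ^ 2) τ
      = -(4 / 3) * τ * (τ + 1 - α) * (2 * τ + 1 - α) * (5 * τ + 4 - α) := by
    unfold Lop DeltaTau DeltaU
    rw [deriv_ug]
    ring
  rw [key]
  have h1 : τ + 1 - α > 0 := by linarith
  have h2 : 2 * τ + 1 - α > 0 := by linarith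
  have h3 : 5 * τ + 4 - α > 0 := by linarith
  have h4 : -(4 / 3) * τ > 0 := by linarith
  positivity
end

section
/- Let $d = \ell = 3$, $1 < r < 3-\sqrt{3}$, and $w_\pm = \frac{r \pm \sqrt{r^2-6r+6}}{2}$. Suppose $0 < w < w_- $ and $0 < \sigma < 1-w_-$. Then $3(1-w)\big((1-w)^2 - \sigma^2\big) - 2\sigma(w_- - w)(w_+ - w) > 2(1-w)(w_- - w)(2 - w_- - w_+) > 0$. -/
theorem stmt_18 (r w σ : ℝ) (h1 : 1 < r) (h2 : r < 3 - Real.sqrt 3)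
    (wm wp : ℝ)
    (hwm : wm = (r - Real.sqrt (r ^ 2 - 6 * r + 6)) / 2)
    (hwp : wp = (r + Real.sqrt (r ^ 2 - 6 * r + 6)) / 2)
    (hw : 0 < w) (hw' : w < wm) (hσ : 0 < σ) (hσ' : σ < 1 - wm) :
    3 * (1 - w) * ((1 - w) ^ 2 - σ ^ 2) - 2 * σ * (wm - w) * (wp - w) >
      2 * (1 - w) * (wm - w) * (2 - wm - wp) ∧
    2 * (1 - w) * (wm - w) * (2 - wm - wp) > 0 := by
  set s := Real.sqrt (r ^ 2 - 6 * r + 6) with hs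
  have hs3 : (1 : ℝ) < Real.sqrt 3 := by
    rw [show (1:ℝ) = Real.sqrt 1 by simp]
    exact Real.sqrt_lt_sqrt (by norm_num) (by norm_num)
  have h33 : Real.sqrt 3 ^ 2 = 3 := Real.sq_sqrt (by norm_num)
  have hr2 : r < 2 := by linarith
  have hs0 : 0 ≤ s := Real.sqrt_nonneg _
  have hs2 : s ^ 2 = r ^ 2 - 6 * r + 6 := by
    rw [hs]
    refine Real.sq_sqrt ?_
    nlinarith [mul_pos (show (0:ℝ) < 3 - r - Real.sqrt 3 by linarith)
      (show (0:ℝ) < 3 - r + Real.sqrt 3 by linarith)]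
  have hwm1 : wm < 1 := by rw [hwm]; nlinarith
  have hww : w < 1 := lt_trans hw' hwm1
  have hwmp : wm ≤ wp := by rw [hwm, hwp]; linarith
  have hsum : wm + wp = r := by rw [hwm, hwp]; ring
  have h2r : 2 - wm - wp > 0 := by rw [hsum] at *; linarith
  have hA : 0 < (1 - wm - σ) := by linarith
  have hB : 0 < (1 - wm + σ) := by linarith
  have hwmw : (0:ℝ) < wm - w := by linarith
  have hwpw : (0:ℝ) < wp - w := by linarith
  have h1w : (0:ℝ) < 1 - w := by linarith
  constructor
  · nlinarith [mul_pos (mul_pos (show (0:ℝ) < 3 * (1 - w) by linarith) hA) hB,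
      mul_pos (mul_pos hwmw hwpw) (show (0:ℝ) < 1 - w - σ by linarith),
      mul_pos (mul_pos h1w hwmw) (show (0:ℝ) < 2 - w - wm by linarith),
      mul_pos (mul_pos (mul_pos h1w hwmw) (show (0:ℝ) < 2 - w - wm by linarith))
        (show (0:ℝ) < 1 by norm_num)]
  · nlinarith [mul_pos (mul_pos h1w hwmw) h2r]
end
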